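/- arXiv:2111.13170 — 4 statements merged into one kernel-verified Lean document; each statement's English description precedes it below -/
import Mathlib

section
/- Let V be a finite-dimensional vector space over a field K, β ∈ V* a linear functional, and φ_β the contraction map on Λ^k V. Then for every decomposable ω = v_1 ∧ ⋯ ∧ v_k, the image φ_β(ω) lies in Λ^{k-1}(ker β); i.e., φ_β takes values in the exterior power of the kernel of β. -/
open ExteriorAlgebra

section Aux

variable {K V : Type} [Field K] [AddCommGroup V] [Module K V]

/-- The contraction map on decomposable tuples, defined for every length. -/
noncomputable def contrS (β : V →ₗ[K] K) : (k : ℕ) → (Fin k → V) → ExteriorAlgebra K V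
  | 0, _ => 0
  | (n+1), v => ∑ i : Fin (n + 1), ((-1 : K) ^ (i : ℕ) * β (v i)) •
      ExteriorAlgebra.ιMulti K n (fun j => v (i.succAbove j))

/-- The span of decomposables with all factors in `ker β`. -/
def kerSpan (β : V →ₗ[K] K) (m : ℕ) : Submodule K (ExteriorAlgebra K V) :=
  Submodule.span K {x : ExteriorAlgebra K V |
    ∃ w : Fin m → V, (∀ j, β (w j) = 0) ∧ x = ExteriorAlgebra.ιMulti K m w}

lemma contrS_succ (β : V →ₗ[K] K) (n : ℕ) (v : Fin (n + 1) → V) :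
    contrS β (n + 1) v = β (v 0) • ExteriorAlgebra.ιMulti K n (Fin.tail v)
      - ι K (v 0) * contrS β n (Fin.tail v) := by
  cases n with
  | zero =>
    simp only [contrS]
    rw [Fin.sum_univ_one]
    have h1 : (fun j : Fin 0 => v ((0 : Fin 1).succAbove j)) = Fin.tail v := by
      funext j; exact j.elim0
    simp [h1]
  | succ m =>
    simp only [contrS]
    rw [Fin.sum_univ_succ]
    have h1 : (fun j : Fin (m+1) => v ((0 : Fin (m+2)).succAbove j)) = Fin.tail v := by
      funext j; rfl
    rw [h1]
    have hper : ∀ j : Fin (m + 1),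
        ((-1 : K) ^ ((j.succ : Fin (m+2)) : ℕ) * β (v j.succ)) •
          ExteriorAlgebra.ιMulti K (m+1) (fun l => v ((j.succ).succAbove l))
        = -(((-1 : K) ^ (j : ℕ) * β (Fin.tail v j)) •
            (ι K (v 0) * ExteriorAlgebra.ιMulti K m
              (fun l => Fin.tail v (j.succAbove l)))) := by
      intro j
      have h2 : ExteriorAlgebra.ιMulti K (m+1) (fun l => v ((j.succ).succAbove l))
          = ι K (v 0) * ExteriorAlgebra.ιMulti K m
              (fun l => Fin.tail v (j.succAbove l)) := by
        rw [ιMulti_succ_apply, Fin.succ_succAbove_zero]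
        have harg : Matrix.vecTail (fun l => v ((j.succ).succAbove l))
            = fun l => Fin.tail v (j.succAbove l) := by
          funext l
          simp [Matrix.vecTail, Fin.tail, Function.comp, Fin.succ_succAbove_succ]
        rw [harg]
      rw [h2]
      have hcoe : ((-1 : K) ^ ((j.succ : Fin (m+2)) : ℕ) * β (v j.succ))
          = -((-1 : K) ^ (j : ℕ) * β (Fin.tail v j)) := by
        have : Fin.tail v j = v j.succ := rfl
        rw [this, Fin.val_succ, pow_succ]
        ring
      rw [hcoe, neg_smul]
    rw [Finset.sum_congr rfl (fun j _ => hper j), Finset.sum_neg_distrib]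
    simp only [Fin.val_zero, pow_zero, one_mul, Finset.mul_sum, mul_smul_comm,
      sub_eq_add_neg]

lemma mul_mem_kerSpan (β : V →ₗ[K] K) {w : V} (hw : β w = 0) {m : ℕ}
    {x : ExteriorAlgebra K V} (hx : x ∈ kerSpan β m) :
    ι K w * x ∈ kerSpan β (m + 1) := by
  induction hx using Submodule.span_induction with
  | mem y hy =>
    obtain ⟨t, ht, rfl⟩ := hy
    apply Submodule.subset_span
    refine ⟨Fin.cons w t, ?_, ?_⟩
    · intro j
      refine Fin.cases ?_ ?_ j
      · simpa using hw
      · intro i; simpa using ht i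
    · rw [ιMulti_succ_apply, Fin.cons_zero]
      congr 1
  | zero => simp
  | add y z _ _ hy hz => rw [mul_add]; exact add_mem hy hz
  | smul c y _ hy => rw [mul_smul_comm]; exact Submodule.smul_mem _ c hy

lemma claim2 (β : V →ₗ[K] K) (u : V) (hu : β u = 1) :
    ∀ (k : ℕ) (t : Fin k → V),
      ExteriorAlgebra.ιMulti K k t - ι K u * contrS β k t ∈ kerSpan β k := by
  intro k
  induction k with
  | zero =>
    intro t
    have h0 : ExteriorAlgebra.ιMulti K 0 t - ι K u * contrS β 0 t
        = ExteriorAlgebra.ιMulti K 0 t := by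
      simp [contrS]
    rw [h0]
    exact Submodule.subset_span ⟨t, fun j => j.elim0, rfl⟩
  | succ m ih =>
    intro t
    set c := β (t 0) with hc
    set w0 := t 0 - c • u with hw0
    have hβw0 : β w0 = 0 := by simp [hw0, hc, hu]
    have ht0 : t 0 = w0 + c • u := by simp [hw0]
    have key : ExteriorAlgebra.ιMulti K (m+1) t - ι K u * contrS β (m+1) t
        = ι K w0 * (ExteriorAlgebra.ιMulti K m (Fin.tail t)
            - ι K u * contrS β m (Fin.tail t)) := by
      rw [contrS_succ, ιMulti_succ_apply]
      have htail : Matrix.vecTail t = Fin.tail t := rfl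
      rw [htail, ht0]
      have huu : ι K u * ι K u = (0 : ExteriorAlgebra K V) := ι_sq_zero u
      have hswap : ∀ x : ExteriorAlgebra K V,
          ι K u * (ι K w0 * x) = -(ι K w0 * (ι K u * x)) := by
        intro x
        have h := ι_add_mul_swap (R := K) u w0
        have : ι K u * ι K w0 = -(ι K w0 * ι K u) := by
          rw [eq_neg_iff_add_eq_zero]; exact h
        rw [← mul_assoc, this, neg_mul, ← mul_assoc]
      simp only [map_add, map_smul, hβw0, hu, smul_eq_mul, mul_one, zero_add,
        add_mul, mul_sub, sub_mul, mul_add, smul_mul_assoc, mul_smul_comm]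
      rw [hswap, ← mul_assoc (ι K u) (ι K u), huu, zero_mul]
      simp only [smul_zero, add_zero]
      abel
    rw [key]
    exact mul_mem_kerSpan β hβw0 (ih (Fin.tail t))

lemma claim1 (β : V →ₗ[K] K) (u : V) (hu : β u = 1) :
    ∀ (n : ℕ) (v : Fin (n + 1) → V), contrS β (n + 1) v ∈ kerSpan β n := by
  intro n
  induction n with
  | zero =>
    intro v
    rw [contrS_succ]
    have h0 : contrS β 0 (Fin.tail v) = 0 := rfl
    rw [h0, mul_zero, sub_zero]
    have h1 : ExteriorAlgebra.ιMulti K 0 (Fin.tail v) - ι K u * contrS β 0 (Fin.tail v)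
        ∈ kerSpan β 0 := claim2 β u hu 0 (Fin.tail v)
    rw [h0, mul_zero, sub_zero] at h1
    exact Submodule.smul_mem _ _ h1
  | succ m ih =>
    intro v
    rw [contrS_succ]
    set c := β (v 0) with hc
    set w0 := v 0 - c • u with hw0
    have hβw0 : β w0 = 0 := by simp [hw0, hc, hu]
    have ht0 : v 0 = w0 + c • u := by simp [hw0]
    have key : β (v 0) • ExteriorAlgebra.ιMulti K (m+1) (Fin.tail v)
          - ι K (v 0) * contrS β (m+1) (Fin.tail v)
        = c • (ExteriorAlgebra.ιMulti K (m+1) (Fin.tail v)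
            - ι K u * contrS β (m+1) (Fin.tail v))
          - ι K w0 * contrS β (m+1) (Fin.tail v) := by
      rw [← hc, ht0]
      simp only [map_add, map_smul, add_mul, smul_mul_assoc, smul_sub]
      abel
    rw [key]
    exact sub_mem (Submodule.smul_mem _ _ (claim2 β u hu (m+1) (Fin.tail v)))
      (mul_mem_kerSpan β hβw0 (ih (Fin.tail v)))

end Aux

/-- For every decomposable `ω = v₁ ∧ ⋯ ∧ v_k`, the image
`φ_β(ω) = Σᵢ (-1)^{i-1} β(vᵢ) v₁ ∧ ⋯ ∧ v̂ᵢ ∧ ⋯ ∧ v_k` lies in `Λ^{k-1}(ker β)`,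
i.e. in the span of the decomposable `(k-1)`-vectors all of whose factors lie in
the kernel of `β`.  (Here `k = n + 1 > 0`.) -/
theorem contraction_lands_in_kernel (K V : Type) [Field K] [AddCommGroup V] [Module K V]
    [FiniteDimensional K V] (n : ℕ) (hkd : n + 1 ≤ Module.finrank K V)
    (β : V →ₗ[K] K) (v : Fin (n + 1) → V) :
    ∑ i : Fin (n + 1), ((-1 : K) ^ (i : ℕ) * β (v i)) •
        ExteriorAlgebra.ιMulti K n (fun j => v (i.succAbove j)) ∈
      Submodule.span K {x : ExteriorAlgebra K V |
        ∃ w : Fin n → V, (∀ j, β (w j) = 0) ∧ x = ExteriorAlgebra.ιMulti K n w} := by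
  by_cases hβ : β = 0
  · have : ∑ i : Fin (n + 1), ((-1 : K) ^ (i : ℕ) * β (v i)) •
        ExteriorAlgebra.ιMulti K n (fun j => v (i.succAbove j)) = 0 := by
      apply Finset.sum_eq_zero
      intro i _
      simp [hβ]
    rw [this]
    exact Submodule.zero_mem _
  · obtain ⟨x, hx⟩ : ∃ x, β x ≠ 0 := by
      by_contra h
      push_neg at h
      exact hβ (LinearMap.ext fun x => by simpa using h x)
    have hu : β ((β x)⁻¹ • x) = 1 := by
      simp [inv_mul_cancel₀ hx]
    have := claim1 β ((β x)⁻¹ • x) hu n v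
    simpa [contrS, kerSpan] using this
end

section
/- Let V be a quadratic space of maximal Witt index p = ⌊dim V / 2⌋ over a field of characteristic ≠ 2, and let W_1, W_2 be maximal isotropic subspaces with q = dim(W_1 ∩ W_2). Then there exists a hyperbolic basis e_1, e_{-1}, …, e_p, e_{-p}, (e_0) of V such that W_1 = span{e_1, …, e_p} and W_2 = span{e_1, …, e_q, e_{-(q+1)}, …, e_{-p}}. -/
section Preamble

variable {K V : Type} [Field K] [AddCommGroup V] [Module K V]

/-- A subspace is isotropic for the bilinear form `B`. -/
def IsotropicSub (B : LinearMap.BilinForm K V) (W : Submodule K V) : Prop :=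
  ∀ x ∈ W, ∀ y ∈ W, B x y = 0

/-- A subspace is maximal isotropic for `B`. -/
def MaxIsotropic (B : LinearMap.BilinForm K V) (W : Submodule K V) : Prop :=
  IsotropicSub B W ∧ ∀ W' : Submodule K V, IsotropicSub B W' → W ≤ W' → W' = W

/-- `V` has maximal Witt index `⌊dim V / 2⌋`. -/
def MaxWittIndex (B : LinearMap.BilinForm K V) : Prop :=
  ∃ W : Submodule K V, IsotropicSub B W ∧
    Module.finrank K ↥W = Module.finrank K V / 2

end Preamble

section Aux

set_option linter.unusedSectionVars false

open Module Submodule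

variable {K V : Type} [Field K] [AddCommGroup V] [Module K V]
variable {B : LinearMap.BilinForm K V}

lemma symm_apply (hsymm : B.IsSymm) (x y : V) : B x y = B y x := by
  have := hsymm.eq x y; simpa using this

lemma mem_ker_flip_iff {x f : V} : x ∈ LinearMap.ker (B.flip f) ↔ B x f = 0 := by
  rw [LinearMap.mem_ker]
  exact Iff.rfl

lemma sup_isotropic (hsymm : B.IsSymm) {W : Submodule K V} (hiso : IsotropicSub B W)
    {v : V} (hv : B v v = 0) (hvW : ∀ w ∈ W, B w v = 0) :
    IsotropicSub B (W ⊔ K ∙ v) := by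
  intro x hx y hy
  rw [Submodule.mem_sup] at hx hy
  obtain ⟨w, hw, x', hx', rfl⟩ := hx
  obtain ⟨w', hw', y', hy', rfl⟩ := hy
  rw [Submodule.mem_span_singleton] at hx' hy'
  obtain ⟨c, rfl⟩ := hx'
  obtain ⟨d, rfl⟩ := hy'
  have h1 : B w w' = 0 := hiso _ hw _ hw'
  have h2 : B w v = 0 := hvW w hw
  have h3 : B v w' = 0 := by rw [symm_apply hsymm]; exact hvW w' hw'
  simp [map_add, map_smul, h1, h2, h3, hv]

/-- vector-maximality from MaxIsotropic -/
lemma MaxIsotropic.vecmax (hsymm : B.IsSymm) {W : Submodule K V} (hW : MaxIsotropic B W) :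
    ∀ v, B v v = 0 → (∀ w ∈ W, B w v = 0) → v ∈ W := by
  intro v hv hvW
  have := hW.2 _ (sup_isotropic hsymm hW.1 hv hvW) le_sup_left
  rw [← this]
  exact le_sup_right (b := K ∙ v) (Submodule.mem_span_singleton_self v)

lemma restrict_isSymm (hsymm : B.IsSymm) (W : Submodule K V) : (B.restrict W).IsSymm := by
  refine ⟨fun x y => ?_⟩
  simpa using hsymm.eq (x : V) (y : V)

/-- hyperbolic decomposition of a subspace -/
lemma decomp_sup {W : Submodule K V} {u f : V} (hu : u ∈ W) (huf : B u f = 1) :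
    W = (K ∙ u) ⊔ (W ⊓ LinearMap.ker (B.flip f)) := by
  apply le_antisymm
  · intro w hw
    have h2 : w - (B w f) • u ∈ W ⊓ LinearMap.ker (B.flip f) := by
      refine Submodule.mem_inf.mpr ⟨Submodule.sub_mem _ hw (Submodule.smul_mem _ _ hu), ?_⟩
      rw [LinearMap.mem_ker]
      simp [map_sub, map_smul, huf, LinearMap.BilinForm.flip_apply]
    have h1 : (B w f) • u ∈ (K ∙ u) := Submodule.smul_mem _ _ (Submodule.mem_span_singleton_self u)
    have : w = (B w f) • u + (w - (B w f) • u) := by abel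
    rw [this]
    exact Submodule.add_mem _ (Submodule.mem_sup_left h1) (Submodule.mem_sup_right h2)
  · exact sup_le ((Submodule.span_singleton_le_iff_mem u W).mpr hu) inf_le_left

lemma sub_le_orth (hsymm : B.IsSymm) {W : Submodule K V} (hiso : IsotropicSub B W)
    {c d : V} (hc : c ∈ W) :
    W ⊓ LinearMap.ker (B.flip d) ≤ B.orthogonal (Submodule.span K ({c, d} : Set V)) := by
  intro x hx
  have hxW : x ∈ W := hx.1
  have hxd : x ∈ LinearMap.ker (B.flip d) := hx.2
  intro nn hn
  obtain ⟨s, t, rfl⟩ := Submodule.mem_span_pair.mp hn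
  have h1 : B c x = 0 := by rw [symm_apply hsymm]; exact hiso x hxW c hc
  have h2 : B d x = 0 := by rw [symm_apply hsymm]; exact mem_ker_flip_iff.mp hxd
  show B (s • c + t • d) x = 0
  simp [map_add, map_smul, h1, h2]

variable [FiniteDimensional K V]

/-- isotropic subspaces have dimension at most `n/2` -/
lemma IsotropicSub.two_finrank_le (hB : B.Nondegenerate) (hsymm : B.IsSymm)
    {W : Submodule K V} (hW : IsotropicSub B W) :
    2 * finrank K W ≤ finrank K V := by
  have hle : W ≤ B.orthogonal W := fun x hx => by
    intro n hn; exact hW n hn x hx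
  have h1 : finrank K W ≤ finrank K (B.orthogonal W) := Submodule.finrank_mono hle
  rw [LinearMap.BilinForm.finrank_orthogonal hB] at h1
  have h2 : finrank K W ≤ finrank K V := Submodule.finrank_le W
  omega

/-- two "vector-maximal" isotropic subspaces: dimension inequality -/
lemma finrank_le_of_vecmax (hsymm : B.IsSymm)
    {W W' : Submodule K V} (hW : IsotropicSub B W) (hW' : IsotropicSub B W')
    (hmax' : ∀ v, B v v = 0 → (∀ w ∈ W', B w v = 0) → v ∈ W') :
    finrank K ↥W ≤ finrank K ↥W' := by
  set φ : ↥W →ₗ[K] Module.Dual K ↥W' := B.compl₁₂ W.subtype W'.subtype with hφ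
  have hker : LinearMap.ker φ = Submodule.comap W.subtype W' := by
    ext x
    simp only [LinearMap.mem_ker, Submodule.mem_comap, Submodule.coe_subtype]
    constructor
    · intro h
      apply hmax' ↑x (hW _ x.2 _ x.2)
      intro w hw
      rw [symm_apply hsymm]
      have := congrArg (fun g => g ⟨w, hw⟩) h
      simpa [hφ] using this
    · intro h
      ext y
      simp [hφ, hW' _ h _ y.2]
  set U' : Submodule K ↥W' := Submodule.comap W'.subtype (W ⊓ W') with hU'
  have hrange : LinearMap.range φ ≤ U'.dualAnnihilator := by
    rintro g ⟨x, rfl⟩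
    rw [Submodule.mem_dualAnnihilator]
    intro w hw
    simp only [hU', Submodule.mem_comap, Submodule.coe_subtype, Submodule.mem_inf] at hw
    simpa [hφ] using hW _ x.2 _ hw.1
  have e1 : finrank K ↥(LinearMap.range φ) + finrank K ↥(LinearMap.ker φ) = finrank K ↥W :=
    LinearMap.finrank_range_add_finrank_ker φ
  have e2 : finrank K ↥(LinearMap.ker φ) = finrank K ↥(W ⊓ W') := by
    rw [hker, ← Submodule.finrank_map_subtype_eq, Submodule.map_comap_subtype]
  have e3 : finrank K ↥U' = finrank K ↥(W ⊓ W') := by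
    rw [hU', ← Submodule.finrank_map_subtype_eq, Submodule.map_comap_subtype,
      inf_eq_right.mpr inf_le_right]
  have e4 : finrank K ↥U'.dualAnnihilator + finrank K ↥U' = finrank K ↥W' := by
    have h := LinearEquiv.finrank_eq (R := K) (M := (↥W' ⧸ U'))
      (N := ↥U'.dualAnnihilator) (Subspace.quotEquivAnnihilator U')
    rw [← h]
    exact Submodule.finrank_quotient_add_finrank U'
  have e5 : finrank K ↥(LinearMap.range φ) ≤ finrank K ↥U'.dualAnnihilator :=
    Submodule.finrank_mono hrange
  omega

/-- find a dual vector inside `W2` -/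
lemma exists_dual_in_W2 (hsymm : B.IsSymm)
    {W1 W2 : Submodule K V} (hW2 : IsotropicSub B W2)
    (hmax1 : ∀ v, B v v = 0 → (∀ w ∈ W1, B w v = 0) → v ∈ W1)
    (hdisj : W1 ⊓ W2 = ⊥) (hdim : finrank K ↥W2 = finrank K ↥W1)
    {a : V} (ha : a ∈ W1) (ha0 : a ≠ 0) : ∃ b ∈ W2, B a b = 1 := by
  set ψ : ↥W2 →ₗ[K] Module.Dual K ↥W1 := B.flip.compl₁₂ W2.subtype W1.subtype with hψ
  have hinj : Function.Injective ψ := by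
    rw [← LinearMap.ker_eq_bot, eq_bot_iff]
    intro y hy
    simp only [LinearMap.mem_ker] at hy
    have hyW1 : (y : V) ∈ W1 := by
      apply hmax1 ↑y (hW2 _ y.2 _ y.2)
      intro w hw
      have := congrArg (fun g => g ⟨w, hw⟩) hy
      simpa [hψ] using this
    have : (y : V) ∈ W1 ⊓ W2 := ⟨hyW1, y.2⟩
    rw [hdisj] at this
    simpa using this
  have hsurj : Function.Surjective ψ := by
    rw [← LinearMap.range_eq_top]
    apply Submodule.eq_top_of_finrank_eq
    rw [LinearMap.finrank_range_of_inj hinj, hdim, Subspace.dual_finrank_eq]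
  have ha' : (⟨a, ha⟩ : ↥W1) ≠ 0 := by
    simp only [ne_eq, Submodule.mk_eq_zero]; exact ha0
  obtain ⟨g, hg⟩ : ∃ g : Module.Dual K ↥W1, g ⟨a, ha⟩ ≠ 0 := by
    by_contra h
    push_neg at h
    exact ha' ((Module.forall_dual_apply_eq_zero_iff K _).mp h)
  obtain ⟨y, hy⟩ := hsurj ((g ⟨a, ha⟩)⁻¹ • g)
  refine ⟨↑y, y.2, ?_⟩
  have := congrArg (fun g => g (⟨a, ha⟩ : ↥W1)) hy
  simp only [hψ, LinearMap.compl₁₂_apply, Submodule.coe_subtype,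
    LinearMap.BilinForm.flip_apply, LinearMap.smul_apply, smul_eq_mul] at this
  rw [this, inv_mul_cancel₀ hg]

lemma decomp_finrank {W : Submodule K V} {u f : V} (hu : u ∈ W) (huf : B u f = 1) :
    finrank K ↥(W ⊓ LinearMap.ker (B.flip f)) + 1 = finrank K ↥W := by
  have hu0 : u ≠ 0 := by rintro rfl; simp at huf
  have hdisj : (K ∙ u) ⊓ (W ⊓ LinearMap.ker (B.flip f)) = ⊥ := by
    rw [eq_bot_iff]
    intro x hx
    have hx1 : x ∈ (K ∙ u) := hx.1
    have hx2 : x ∈ LinearMap.ker (B.flip f) := hx.2.2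
    rw [Submodule.mem_span_singleton] at hx1
    obtain ⟨c, rfl⟩ := hx1
    rw [LinearMap.mem_ker] at hx2
    simp only [map_smul, LinearMap.BilinForm.flip_apply, smul_eq_mul, huf,
      mul_one] at hx2
    simp [hx2]
  have := Submodule.finrank_sup_add_finrank_inf_eq (K ∙ u) (W ⊓ LinearMap.ker (B.flip f))
  rw [hdisj, ← decomp_sup hu huf, finrank_span_singleton hu0] at this
  rw [finrank_bot, add_zero] at this
  omega

lemma plane_disj (hsymm : B.IsSymm) {a b : V}
    (haa : B a a = 0) (hbb : B b b = 0) (hab : B a b = 1) :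
    Disjoint (Submodule.span K ({a, b} : Set V))
      (B.orthogonal (Submodule.span K ({a, b} : Set V))) := by
  have hba : B b a = 1 := by rw [symm_apply hsymm]; exact hab
  rw [disjoint_iff, eq_bot_iff]
  intro x hx
  have hx1 : x ∈ Submodule.span K ({a, b} : Set V) := hx.1
  have hx2 : x ∈ B.orthogonal (Submodule.span K ({a, b} : Set V)) := hx.2
  obtain ⟨s, t, rfl⟩ := Submodule.mem_span_pair.mp hx1
  have hax : B a (s • a + t • b) = 0 :=
    hx2 a (Submodule.subset_span (by simp))
  have hbx : B b (s • a + t • b) = 0 :=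
    hx2 b (Submodule.subset_span (by simp))
  simp only [map_add, map_smul, smul_eq_mul, haa, hbb, hab, hba, mul_zero, mul_one,
    zero_add, add_zero] at hax hbx
  simp [hax, hbx]

lemma plane_finrank {a b : V} (haa : B a a = 0) (hbb : B b b = 0) (hab : B a b = 1) :
    finrank K ↥(Submodule.span K ({a, b} : Set V)) = 2 := by
  have hli : LinearIndependent K ![a, b] := by
    rw [LinearIndependent.pair_iff]
    intro s t hst
    have h1 := congrArg (fun x => B x b) hst
    have h2 := congrArg (fun x => B a x) hst
    simp only [map_add, map_smul, LinearMap.add_apply, LinearMap.smul_apply, smul_eq_mul,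
      haa, hbb, hab, map_zero, LinearMap.zero_apply, mul_zero, mul_one, zero_add,
      add_zero] at h1 h2
    exact ⟨h1, h2⟩
  have h := finrank_span_eq_card hli
  rw [show (Set.range ![a, b]) = {a, b} by
    simp [Matrix.range_cons, Matrix.range_empty, Set.pair_comm]] at h
  simpa using h

section Core

variable {Vo W : Submodule K V} {c d : V}

lemma core_map (hle : W ⊓ LinearMap.ker (B.flip d) ≤ Vo) :
    Submodule.map Vo.subtype
      (Submodule.comap Vo.subtype (W ⊓ LinearMap.ker (B.flip d)))
      = W ⊓ LinearMap.ker (B.flip d) := by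
  rw [Submodule.map_comap_subtype, inf_eq_right.mpr hle]

lemma core_iso (hiso : IsotropicSub B W) :
    IsotropicSub (B.restrict Vo)
      (Submodule.comap Vo.subtype (W ⊓ LinearMap.ker (B.flip d))) := by
  intro x hx y hy
  have hx1 : (x : V) ∈ W := hx.1
  have hy1 : (y : V) ∈ W := hy.1
  simpa using hiso _ hx1 _ hy1

lemma core_vecmax (hsymm : B.IsSymm) (hiso : IsotropicSub B W)
    (hmax : ∀ v, B v v = 0 → (∀ w ∈ W, B w v = 0) → v ∈ W)
    (hc : c ∈ W) (hcd : B c d = 1)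
    (hcdVo : ∀ x ∈ Vo, B c x = 0 ∧ B d x = 0)
    (hle : W ⊓ LinearMap.ker (B.flip d) ≤ Vo) :
    ∀ v, (B.restrict Vo) v v = 0 →
      (∀ w ∈ Submodule.comap Vo.subtype (W ⊓ LinearMap.ker (B.flip d)),
        (B.restrict Vo) w v = 0) →
      v ∈ Submodule.comap Vo.subtype (W ⊓ LinearMap.ker (B.flip d)) := by
  intro v hv hvW
  have hvV : (v : V) ∈ W := by
    apply hmax _ (by simpa using hv)
    intro w hw
    rw [decomp_sup hc hcd] at hw
    rw [Submodule.mem_sup] at hw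
    obtain ⟨y, hy, z, hz, rfl⟩ := hw
    rw [Submodule.mem_span_singleton] at hy
    obtain ⟨s, rfl⟩ := hy
    have h1 : B c (v : V) = 0 := (hcdVo _ v.2).1
    have h2 : B z (v : V) = 0 := by
      have := hvW ⟨z, hle hz⟩ (Submodule.mem_comap.mpr hz)
      simpa using this
    simp [map_add, map_smul, h1, h2]
  have hker : (v : V) ∈ LinearMap.ker (B.flip d) := by
    rw [mem_ker_flip_iff, symm_apply hsymm]
    exact (hcdVo _ v.2).2
  exact Submodule.mem_comap.mpr (Submodule.mem_inf.mpr ⟨hvV, hker⟩)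

end Core

section FinImage

variable {α : Type*} {m : ℕ}

lemma image_cons_lt (x : α) (g : Fin m → α) {k : ℕ} (hk : 1 ≤ k) :
    (Fin.cons x g : Fin (m + 1) → α) '' {i | (i : ℕ) < k}
      = insert x (g '' {j | (j : ℕ) < k - 1}) := by
  ext y
  simp only [Set.mem_image, Set.mem_insert_iff, Set.mem_setOf_eq]
  constructor
  · rintro ⟨i, hi, rfl⟩
    rcases Fin.eq_zero_or_eq_succ i with rfl | ⟨j, rfl⟩
    · left; simp
    · right
      refine ⟨j, ?_, by simp⟩
      rw [Fin.val_succ] at hi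
      omega
  · rintro (rfl | ⟨j, hj, rfl⟩)
    · exact ⟨0, by simp; omega, by simp⟩
    · refine ⟨j.succ, ?_, by simp⟩
      rw [Fin.val_succ]
      omega

lemma image_cons_ge (x : α) (g : Fin m → α) {k : ℕ} (hk : 1 ≤ k) :
    (Fin.cons x g : Fin (m + 1) → α) '' {i | k ≤ (i : ℕ)}
      = g '' {j | k - 1 ≤ (j : ℕ)} := by
  ext y
  simp only [Set.mem_image, Set.mem_setOf_eq]
  constructor
  · rintro ⟨i, hi, rfl⟩
    rcases Fin.eq_zero_or_eq_succ i with rfl | ⟨j, rfl⟩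
    · simp only [Fin.val_zero] at hi; omega
    · refine ⟨j, ?_, by simp⟩
      rw [Fin.val_succ] at hi
      omega
  · rintro ⟨j, hj, rfl⟩
    refine ⟨j.succ, ?_, by simp⟩
    rw [Fin.val_succ]
    omega

end FinImage

end Aux
section Key

open Module Submodule

variable {K : Type} [Field K]

theorem key_induction (h2 : (2 : K) ≠ 0) :
    ∀ (n : ℕ) (V : Type) (_ : AddCommGroup V), ∀ (_ : Module K V) (_ : FiniteDimensional K V)
    (B : LinearMap.BilinForm K V), Module.finrank K V = n → B.IsSymm → B.Nondegenerate →
    ∀ W1 W2 : Submodule K V, IsotropicSub B W1 → IsotropicSub B W2 →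
    (∀ v, B v v = 0 → (∀ w ∈ W1, B w v = 0) → v ∈ W1) →
    (∀ v, B v v = 0 → (∀ w ∈ W2, B w v = 0) → v ∈ W2) →
    finrank K ↥W1 = n / 2 → finrank K ↥W2 = n / 2 →
    ∃ e f : Fin (n / 2) → V,
      (∀ i j, B (e i) (e j) = 0) ∧ (∀ i j, B (f i) (f j) = 0) ∧
      (∀ i j, B (e i) (f j) = if i = j then 1 else 0) ∧
      W1 = Submodule.span K (Set.range e) ∧
      W2 = Submodule.span K
        (e '' {i | (i : ℕ) < finrank K ↥(W1 ⊓ W2)} ∪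
          f '' {i | finrank K ↥(W1 ⊓ W2) ≤ (i : ℕ)}) ∧
      (Even n → Submodule.span K (Set.range e ∪ Set.range f) = ⊤) ∧
      (Odd n → ∃ e0 : V, (∀ i, B e0 (e i) = 0 ∧ B e0 (f i) = 0) ∧ B e0 e0 ≠ 0 ∧
        Submodule.span K (Set.range e ∪ Set.range f ∪ {e0}) = ⊤) := by
  intro n
  induction n using Nat.strong_induction_on with
  | _ n IH =>
  intro V _ _ _ B hn hsymm hB W1 W2 hiso1 hiso2 hmax1 hmax2 hd1 hd2
  by_cases hn1 : n ≤ 1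
  · -- base case
    have h0 : n / 2 = 0 := by omega
    have hW1bot : W1 = ⊥ := Submodule.finrank_eq_zero.mp (by omega)
    have hW2bot : W2 = ⊥ := Submodule.finrank_eq_zero.mp (by omega)
    rw [h0]
    have himg : ∀ (S : Set (Fin 0)) (g : Fin 0 → V), g '' S = ∅ := by
      intro S g
      rw [Set.eq_empty_of_isEmpty S, Set.image_empty]
    refine ⟨Fin.elim0, Fin.elim0, fun i => i.elim0, fun i => i.elim0, fun i => i.elim0,
      ?_, ?_, ?_, ?_⟩
    · rw [Set.range_eq_empty, Submodule.span_empty, hW1bot]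
    · rw [himg, himg, Set.empty_union, Submodule.span_empty, hW2bot]
    · intro hev
      have hn0 : n = 0 := by rw [Nat.even_iff] at hev; omega
      have hsub : Subsingleton V := by
        rw [← Module.finrank_zero_iff (R := K), hn, hn0]
      rw [eq_top_iff]
      intro x _
      rw [Subsingleton.elim x 0]
      exact Submodule.zero_mem _
    · intro hodd
      have hn0 : n = 1 := by rw [Nat.odd_iff] at hodd; omega
      have hnt : Nontrivial V := by
        apply Module.nontrivial_of_finrank_pos (R := K)
        omega
      obtain ⟨v, hv⟩ := exists_ne (0 : V)
      have hsp : Submodule.span K {v} = ⊤ :=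
        Submodule.eq_top_of_finrank_eq (by rw [finrank_span_singleton hv, hn, hn0])
      have hBv : B v v ≠ 0 := by
        intro hB0
        apply hv
        apply hB.1 v
        intro y
        have hy : y ∈ Submodule.span K {v} := by rw [hsp]; exact Submodule.mem_top
        obtain ⟨c, rfl⟩ := Submodule.mem_span_singleton.mp hy
        simp [map_smul, hB0]
      refine ⟨v, fun i => i.elim0, hBv, ?_⟩
      rw [Set.range_eq_empty, Set.empty_union, Set.empty_union]
      exact hsp
  · -- inductive step
    push_neg at hn1
    obtain ⟨a, b, c2, d2, ha1, haa, hbb, hab, hc2, hcd2, hset2, hflag⟩ :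
        ∃ a b c2 d2 : V, a ∈ W1 ∧ B a a = 0 ∧ B b b = 0 ∧ B a b = 1 ∧ c2 ∈ W2 ∧
          B c2 d2 = 1 ∧ ({c2, d2} : Set V) = {a, b} ∧
          ((c2 = a ∧ d2 = b ∧ 1 ≤ finrank K ↥(W1 ⊓ W2)) ∨
            (c2 = b ∧ d2 = a ∧ W1 ⊓ W2 = ⊥)) := by
      rcases Nat.eq_zero_or_pos (finrank K ↥(W1 ⊓ W2)) with hq0 | hq1
      · have hbot : W1 ⊓ W2 = ⊥ := Submodule.finrank_eq_zero.mp hq0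
        have hW1ne : W1 ≠ ⊥ := by
          intro h
          rw [h, finrank_bot] at hd1
          omega
        obtain ⟨a, ha1, ha0⟩ := Submodule.exists_mem_ne_zero_of_ne_bot hW1ne
        obtain ⟨b, hb2, hab⟩ := exists_dual_in_W2 hsymm hiso2 hmax1 hbot
          (hd2.trans hd1.symm) ha1 ha0
        exact ⟨a, b, b, a, ha1, hiso1 _ ha1 _ ha1, hiso2 _ hb2 _ hb2, hab, hb2,
          by rw [symm_apply hsymm]; exact hab, Set.pair_comm b a, Or.inr ⟨rfl, rfl, hbot⟩⟩
      · have hUne : W1 ⊓ W2 ≠ ⊥ := by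
          intro h
          rw [h, finrank_bot] at hq1
          omega
        obtain ⟨a, haU, ha0⟩ := Submodule.exists_mem_ne_zero_of_ne_bot hUne
        have ha1 : a ∈ W1 := haU.1
        have ha2 : a ∈ W2 := haU.2
        have haa : B a a = 0 := hiso1 _ ha1 _ ha1
        obtain ⟨v, hv⟩ : ∃ v, B a v ≠ 0 := by
          by_contra h
          push_neg at h
          exact ha0 (hB.1 a h)
        obtain ⟨v1, hav1⟩ : ∃ v1, B a v1 = 1 :=
          ⟨(B a v)⁻¹ • v, by rw [map_smul, smul_eq_mul, inv_mul_cancel₀ hv]⟩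
        have hv1a : B v1 a = 1 := by rw [symm_apply hsymm]; exact hav1
        obtain ⟨b, hab, hbb⟩ : ∃ b, B a b = 1 ∧ B b b = 0 := by
          refine ⟨v1 - (2⁻¹ * B v1 v1) • a, ?_, ?_⟩
          · rw [map_sub, map_smul, smul_eq_mul, haa, hav1, mul_zero, sub_zero]
          · simp only [map_sub, map_smul, LinearMap.sub_apply, LinearMap.smul_apply,
              smul_eq_mul, haa, hav1, hv1a, mul_zero, mul_one, sub_zero]
            field_simp
            ring
        exact ⟨a, b, a, b, ha1, haa, hbb, hab, ha2, hab, rfl, Or.inl ⟨rfl, rfl, hq1⟩⟩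
    have hba : B b a = 1 := by rw [symm_apply hsymm]; exact hab
    set P := Submodule.span K ({a, b} : Set V) with hP
    set Vo := B.orthogonal P with hVo
    have haP : a ∈ P := Submodule.subset_span (by simp)
    have hbP : b ∈ P := Submodule.subset_span (by simp)
    have hdisjP : Disjoint P Vo := plane_disj hsymm haa hbb hab
    have hcompl : IsCompl P Vo :=
      (LinearMap.BilinForm.isCompl_orthogonal_iff_disjoint hsymm.isRefl).mpr hdisjP
    have hfP : finrank K ↥P = 2 := plane_finrank haa hbb hab
    have hfVo : finrank K ↥Vo = n - 2 := by
      rw [hVo, LinearMap.BilinForm.finrank_orthogonal hB, hfP, hn]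
    have hresnd : (B.restrict Vo).Nondegenerate := by
      apply LinearMap.BilinForm.nondegenerate_restrict_of_disjoint_orthogonal B hsymm.isRefl
      rw [hVo, LinearMap.BilinForm.orthogonal_orthogonal hB hsymm.isRefl]
      exact hdisjP.symm
    have hressym := restrict_isSymm hsymm Vo
    have hortho : ∀ x ∈ Vo, B a x = 0 ∧ B b x = 0 := fun x hx => ⟨hx a haP, hx b hbP⟩
    have hle1 : W1 ⊓ LinearMap.ker (B.flip b) ≤ Vo := sub_le_orth hsymm hiso1 ha1
    have hle2 : W2 ⊓ LinearMap.ker (B.flip d2) ≤ Vo := by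
      have h := sub_le_orth hsymm hiso2 hc2 (d := d2)
      rw [hset2] at h
      exact h
    set W1c := Submodule.comap Vo.subtype (W1 ⊓ LinearMap.ker (B.flip b)) with hW1c
    set W2c := Submodule.comap Vo.subtype (W2 ⊓ LinearMap.ker (B.flip d2)) with hW2c
    have hmap1 : Submodule.map Vo.subtype W1c = W1 ⊓ LinearMap.ker (B.flip b) := core_map hle1
    have hmap2 : Submodule.map Vo.subtype W2c = W2 ⊓ LinearMap.ker (B.flip d2) :=
      core_map hle2
    have hiso1c : IsotropicSub (B.restrict Vo) W1c := core_iso hiso1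
    have hiso2c : IsotropicSub (B.restrict Vo) W2c := core_iso hiso2
    have hcdVo2 : ∀ x ∈ Vo, B c2 x = 0 ∧ B d2 x = 0 := by
      intro x hx
      rcases hflag with ⟨hc2', hd2', -⟩ | ⟨hc2', hd2', -⟩
      · rw [hc2', hd2']; exact hortho x hx
      · rw [hc2', hd2']; exact ⟨(hortho x hx).2, (hortho x hx).1⟩
    have hmax1c := core_vecmax hsymm hiso1 hmax1 ha1 hab hortho hle1
    have hmax2c := core_vecmax hsymm hiso2 hmax2 hc2 hcd2 hcdVo2 hle2
    have hfr1 : finrank K ↥W1c = (n - 2) / 2 := by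
      have h := decomp_finrank ha1 hab
      have h' : finrank K ↥W1c = finrank K ↥(W1 ⊓ LinearMap.ker (B.flip b)) := by
        rw [← hmap1, Submodule.finrank_map_subtype_eq]
      omega
    have hfr2 : finrank K ↥W2c = (n - 2) / 2 := by
      have h := decomp_finrank hc2 hcd2
      have h' : finrank K ↥W2c = finrank K ↥(W2 ⊓ LinearMap.ker (B.flip d2)) := by
        rw [← hmap2, Submodule.finrank_map_subtype_eq]
      omega
    have hmapinter : Submodule.map Vo.subtype (W1c ⊓ W2c)
        = (W1 ⊓ LinearMap.ker (B.flip b)) ⊓ (W2 ⊓ LinearMap.ker (B.flip d2)) := by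
      rw [Submodule.map_inf Vo.subtype (Submodule.injective_subtype Vo), hmap1, hmap2]
    have hqq : finrank K ↥(W1c ⊓ W2c) = finrank K ↥(W1 ⊓ W2) - 1 := by
      have hfin : finrank K ↥(W1c ⊓ W2c)
          = finrank K ↥((W1 ⊓ LinearMap.ker (B.flip b)) ⊓ (W2 ⊓ LinearMap.ker (B.flip d2))) := by
        rw [← hmapinter, Submodule.finrank_map_subtype_eq]
      rcases hflag with ⟨hc2', hd2', hq1⟩ | ⟨hc2', hd2', hbot⟩
      · have hinter : (W1 ⊓ LinearMap.ker (B.flip b)) ⊓ (W2 ⊓ LinearMap.ker (B.flip d2))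
            = (W1 ⊓ W2) ⊓ LinearMap.ker (B.flip b) := by
          rw [hd2', inf_inf_inf_comm, inf_idem]
        have haU : a ∈ W1 ⊓ W2 := ⟨ha1, by rw [← hc2']; exact hc2⟩
        have h := decomp_finrank haU hab
        rw [hfin, hinter]
        omega
      · have h0 : finrank K ↥((W1 ⊓ LinearMap.ker (B.flip b)) ⊓ (W2 ⊓ LinearMap.ker (B.flip d2)))
            = 0 := by
          have hle : (W1 ⊓ LinearMap.ker (B.flip b)) ⊓ (W2 ⊓ LinearMap.ker (B.flip d2)) ≤ ⊥ := by
            rw [← hbot]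
            exact inf_le_inf inf_le_left inf_le_left
          rw [le_bot_iff.mp hle, finrank_bot]
        rw [hfin, h0, hbot, finrank_bot]
    obtain ⟨e'', f'', hee, hff, hef, hsp1, hsp2, heven, hodd⟩ :=
      IH (n - 2) (by omega) ↥Vo inferInstance inferInstance inferInstance (B.restrict Vo) hfVo hressym hresnd W1c W2c
        hiso1c hiso2c hmax1c hmax2c hfr1 hfr2
    have hm : n / 2 = (n - 2) / 2 + 1 := by omega
    rw [hm]
    -- helper equalities for values of B
    have hea : ∀ i, B a ↑(e'' i) = 0 := fun i => (hortho _ (e'' i).2).1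
    have heb : ∀ i, B b ↑(e'' i) = 0 := fun i => (hortho _ (e'' i).2).2
    have hfa : ∀ i, B a ↑(f'' i) = 0 := fun i => (hortho _ (f'' i).2).1
    have hfb : ∀ i, B b ↑(f'' i) = 0 := fun i => (hortho _ (f'' i).2).2
    have hae : ∀ i, B ↑(e'' i) a = 0 := fun i => by rw [symm_apply hsymm]; exact hea i
    have hbe : ∀ i, B ↑(e'' i) b = 0 := fun i => by rw [symm_apply hsymm]; exact heb i
    have haf : ∀ i, B ↑(f'' i) a = 0 := fun i => by rw [symm_apply hsymm]; exact hfa i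
    have hbf : ∀ i, B ↑(f'' i) b = 0 := fun i => by rw [symm_apply hsymm]; exact hfb i
    have hee' : ∀ i j, B ↑(e'' i) ↑(e'' j) = 0 := fun i j => by simpa using hee i j
    have hff' : ∀ i j, B ↑(f'' i) ↑(f'' j) = 0 := fun i j => by simpa using hff i j
    have hef' : ∀ i j, B ↑(e'' i) ↑(f'' j) = if i = j then 1 else 0 := fun i j => by
      simpa using hef i j
    -- span helpers
    have hrngE : Submodule.span K (Set.range (fun i => (↑(e'' i) : V)))
        = Submodule.map Vo.subtype (Submodule.span K (Set.range e'')) := by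
      rw [show Set.range (fun i => (↑(e'' i) : V)) = Vo.subtype '' Set.range e'' from by
        rw [← Set.range_comp]; rfl, Submodule.span_image]
    have hrngF : Submodule.span K (Set.range (fun i => (↑(f'' i) : V)))
        = Submodule.map Vo.subtype (Submodule.span K (Set.range f'')) := by
      rw [show Set.range (fun i => (↑(f'' i) : V)) = Vo.subtype '' Set.range f'' from by
        rw [← Set.range_comp]; rfl, Submodule.span_image]
    refine ⟨Fin.cons a (fun i => ↑(e'' i)), Fin.cons b (fun i => ↑(f'' i)),
      ?_, ?_, ?_, ?_, ?_, ?_, ?_⟩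
    · intro i j
      induction i using Fin.cases with
      | zero =>
        induction j using Fin.cases with
        | zero => simpa using haa
        | succ j => simpa using hea j
      | succ i =>
        induction j using Fin.cases with
        | zero => simpa using hae i
        | succ j => simpa using hee' i j
    · intro i j
      induction i using Fin.cases with
      | zero =>
        induction j using Fin.cases with
        | zero => simpa using hbb
        | succ j => simpa using hfb j
      | succ i =>
        induction j using Fin.cases with
        | zero => simpa using hbf i
        | succ j => simpa using hff' i j
    · intro i j
      induction i using Fin.cases with
      | zero =>
        induction j using Fin.cases with
        | zero => simpa using hab
        | succ j =>
          rw [if_neg (Ne.symm (Fin.succ_ne_zero j))]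
          simpa using hfa j
      | succ i =>
        induction j using Fin.cases with
        | zero =>
          rw [if_neg (Fin.succ_ne_zero i)]
          simpa using hbe i
        | succ j =>
          simp only [Fin.cons_succ, Fin.succ_inj]
          exact hef' i j
    · -- W1 span
      rw [Fin.range_cons, Submodule.span_insert, hrngE, ← hsp1, hmap1]
      exact decomp_sup ha1 hab
    · -- W2 span
      rcases hflag with ⟨hc2', hd2', hq1⟩ | ⟨hc2', hd2', hbot⟩
      · subst hc2' hd2'
        rw [image_cons_lt _ _ hq1, image_cons_ge _ _ hq1, Set.insert_union,
          Submodule.span_insert]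
        have h1 : (fun i => (↑(e'' i) : V)) '' {j | (j : ℕ) < finrank K ↥(W1 ⊓ W2) - 1}
            = Vo.subtype '' (e'' '' {j | (j : ℕ) < finrank K ↥(W1 ⊓ W2) - 1}) := by
          rw [← Set.image_comp]; rfl
        have h1' : (fun i => (↑(f'' i) : V)) '' {j | finrank K ↥(W1 ⊓ W2) - 1 ≤ (j : ℕ)}
            = Vo.subtype '' (f'' '' {j | finrank K ↥(W1 ⊓ W2) - 1 ≤ (j : ℕ)}) := by
          rw [← Set.image_comp]; rfl
        rw [h1, h1', ← Set.image_union, Submodule.span_image, hqq] at *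
        rw [← hsp2, hmap2]
        exact decomp_sup hc2 hcd2
      · subst hc2' hd2'
        have hq0 : finrank K ↥(W1 ⊓ W2) = 0 := by rw [hbot, finrank_bot]
        have hs1 : {i : Fin ((n - 2) / 2 + 1) | (i : ℕ) < 0} = ∅ := by ext i; simp
        have hs2 : {i : Fin ((n - 2) / 2 + 1) | 0 ≤ (i : ℕ)} = Set.univ := by ext i; simp
        rw [hq0, hs1, hs2, Set.image_empty, Set.image_univ, Set.empty_union,
          Fin.range_cons, Submodule.span_insert, hrngF]
        have hq0' : finrank K ↥(W1c ⊓ W2c) = 0 := by omega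
        rw [hq0'] at hsp2
        have hs1' : {i : Fin ((n - 2) / 2) | (i : ℕ) < 0} = ∅ := by ext i; simp
        have hs2' : {i : Fin ((n - 2) / 2) | 0 ≤ (i : ℕ)} = Set.univ := by ext i; simp
        rw [hs1', hs2', Set.image_empty, Set.image_univ, Set.empty_union] at hsp2
        rw [← hsp2, hmap2]
        exact decomp_sup hc2 hcd2
    · -- even case
      intro hev
      have hev2 : Even (n - 2) := by
        rw [Nat.even_iff] at hev
        rw [Nat.even_iff]
        omega
      have htop := heven hev2
      rw [Submodule.span_union, Fin.range_cons, Fin.range_cons, Submodule.span_insert,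
        Submodule.span_insert, hrngE, hrngF, sup_sup_sup_comm]
      have h3 : Submodule.span K {a} ⊔ Submodule.span K {b} = P := by
        rw [hP, show ({a, b} : Set V) = insert a {b} from rfl, Submodule.span_insert]
      have h4 : Submodule.map Vo.subtype (Submodule.span K (Set.range e''))
            ⊔ Submodule.map Vo.subtype (Submodule.span K (Set.range f''))
          = Submodule.map Vo.subtype (Submodule.span K (Set.range e'' ∪ Set.range f'')) := by
        rw [Submodule.span_union, Submodule.map_sup]
      rw [h3, h4, htop, Submodule.map_subtype_top]
      exact hcompl.sup_eq_top
    · -- odd case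
      intro hodd'
      have hodd2 : Odd (n - 2) := by
        rw [Nat.odd_iff] at hodd'
        rw [Nat.odd_iff]
        omega
      obtain ⟨e0'', h0ef, h0ne, h0span⟩ := hodd hodd2
      have h0a : B (↑e0'' : V) a = 0 := by
        rw [symm_apply hsymm]; exact (hortho _ e0''.2).1
      have h0b : B (↑e0'' : V) b = 0 := by
        rw [symm_apply hsymm]; exact (hortho _ e0''.2).2
      refine ⟨↑e0'', ?_, by simpa using h0ne, ?_⟩
      · intro i
        induction i using Fin.cases with
        | zero => exact ⟨by simpa using h0a, by simpa using h0b⟩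
        | succ i =>
          refine ⟨by simpa using (h0ef i).1, by simpa using (h0ef i).2⟩
      · rw [Submodule.span_union, Submodule.span_union, Fin.range_cons, Fin.range_cons,
          Submodule.span_insert, Submodule.span_insert, hrngE, hrngF]
        have h5 : Submodule.span K {(↑e0'' : V)}
            = Submodule.map Vo.subtype (Submodule.span K {e0''}) := by
          rw [show ({(↑e0'' : V)} : Set V) = Vo.subtype '' {e0''} by simp,
            Submodule.span_image]
        rw [h5, sup_sup_sup_comm, sup_assoc]
        have h3 : Submodule.span K {a} ⊔ Submodule.span K {b} = P := by
          rw [hP, show ({a, b} : Set V) = insert a {b} from rfl, Submodule.span_insert]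
        have h4 : Submodule.map Vo.subtype (Submodule.span K (Set.range e''))
              ⊔ Submodule.map Vo.subtype (Submodule.span K (Set.range f''))
              ⊔ Submodule.map Vo.subtype (Submodule.span K {e0''})
            = Submodule.map Vo.subtype
                (Submodule.span K (Set.range e'' ∪ Set.range f'' ∪ {e0''})) := by
          rw [Submodule.span_union, Submodule.span_union, Submodule.map_sup,
            Submodule.map_sup]
        rw [h3, h4, h0span, Submodule.map_subtype_top]
        exact hcompl.sup_eq_top

end Key

open Module Submodule


/-- If `W₁, W₂` are maximal isotropic subspaces of a quadratic space of
maximal Witt index `p = ⌊dim V/2⌋` and `q = dim (W₁ ∩ W₂)`, then there is a hyperbolic basis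
`e₁, e₋₁, …, e_p, e₋p, (e₀)` of `V` with `W₁ = span{e₁,…,e_p}` and
`W₂ = span{e₁,…,e_q, e₋(q+1),…,e₋p}`. Here `e i` plays the role of `e_{i+1}` and `f i` of
`e_{-(i+1)}`. -/
theorem exists_hyperbolic_basis_adapted (K V : Type) [Field K] [AddCommGroup V] [Module K V]
    [FiniteDimensional K V] (h2 : (2 : K) ≠ 0)
    (B : LinearMap.BilinForm K V) (hsymm : B.IsSymm) (hB : B.Nondegenerate)
    (hWitt : MaxWittIndex B)
    (W1 W2 : Submodule K V) (hW1 : MaxIsotropic B W1) (hW2 : MaxIsotropic B W2) :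
    ∃ e f : Fin (Module.finrank K V / 2) → V,
      (∀ i j, B (e i) (e j) = 0) ∧ (∀ i j, B (f i) (f j) = 0) ∧
      (∀ i j, B (e i) (f j) = if i = j then 1 else 0) ∧
      W1 = Submodule.span K (Set.range e) ∧
      W2 = Submodule.span K
        (e '' {i | (i : ℕ) < Module.finrank K ↥(W1 ⊓ W2)} ∪
          f '' {i | Module.finrank K ↥(W1 ⊓ W2) ≤ (i : ℕ)}) ∧
      (Even (Module.finrank K V) →
        LinearIndependent K (Sum.elim e f) ∧
        Submodule.span K (Set.range e ∪ Set.range f) = ⊤) ∧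
      (Odd (Module.finrank K V) → ∃ e0 : V,
        (∀ i, B e0 (e i) = 0 ∧ B e0 (f i) = 0) ∧ B e0 e0 ≠ 0 ∧
        LinearIndependent K (Sum.elim (Sum.elim e f) (fun _ : Fin 1 => e0)) ∧
        Submodule.span K (Set.range e ∪ Set.range f ∪ {e0}) = ⊤) := by
  obtain ⟨W0, hW0iso, hW0dim⟩ := hWitt
  -- W0 is itself "vector-maximal"
  have hW0max : ∀ v, B v v = 0 → (∀ w ∈ W0, B w v = 0) → v ∈ W0 := by
    intro v hv hvW
    by_contra hvnot
    have hiso' : IsotropicSub B (W0 ⊔ K ∙ v) := sup_isotropic hsymm hW0iso hv hvW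
    have hrank := hiso'.two_finrank_le hB hsymm
    have hlt : W0 < W0 ⊔ K ∙ v := by
      refine lt_of_le_of_ne le_sup_left ?_
      intro heq
      apply hvnot
      rw [heq]
      exact le_sup_right (b := K ∙ v) (Submodule.mem_span_singleton_self v)
    have hlt' := Submodule.finrank_lt_finrank_of_lt hlt
    omega
  have hd1 : finrank K ↥W1 = finrank K V / 2 := by
    have h1 := finrank_le_of_vecmax hsymm hW0iso hW1.1 (hW1.vecmax hsymm)
    have h2' := finrank_le_of_vecmax hsymm hW1.1 hW0iso hW0max
    omega
  have hd2 : finrank K ↥W2 = finrank K V / 2 := by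
    have h1 := finrank_le_of_vecmax hsymm hW0iso hW2.1 (hW2.vecmax hsymm)
    have h2' := finrank_le_of_vecmax hsymm hW2.1 hW0iso hW0max
    omega
  obtain ⟨e, f, hee, hff, hef, hsp1, hsp2, heven, hodd⟩ :=
    key_induction h2 (finrank K V) V inferInstance inferInstance inferInstance B rfl hsymm hB
      W1 W2 hW1.1 hW2.1 (hW1.vecmax hsymm) (hW2.vecmax hsymm) hd1 hd2
  refine ⟨e, f, hee, hff, hef, hsp1, hsp2, ?_, ?_⟩
  · intro hev
    have htop := heven hev
    refine ⟨?_, htop⟩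
    apply linearIndependent_of_top_le_span_of_card_eq_finrank
    · rw [Set.Sum.elim_range, htop]
    · obtain ⟨k, hk⟩ := hev
      simp only [Fintype.card_sum, Fintype.card_fin]
      omega
  · intro hodd'
    obtain ⟨e0, h1, h2', h3⟩ := hodd hodd'
    refine ⟨e0, h1, h2', ?_, h3⟩
    apply linearIndependent_of_top_le_span_of_card_eq_finrank
    · rw [Set.Sum.elim_range, Set.Sum.elim_range, Set.range_const, h3]
    · obtain ⟨k, hk⟩ := hodd'
      simp only [Fintype.card_sum, Fintype.card_fin]
      omega
end

section
/- Let V = K^7 with basis e_0, e_1, e_2, e_3, e_{-1}, e_{-2}, e_{-3} and symmetric bilinear form given by ⟨e_0,e_0⟩ = -1/2, ⟨e_i, e_{-i}⟩ = 1 for i = 1,2,3, and all other pairings zero. Then the 3-vector ω_7 = e_1 ∧ e_2 ∧ e_3 + e_{-1} ∧ e_{-2} ∧ e_{-3} + e_0 ∧ (e_1 ∧ e_{-1} + e_2 ∧ e_{-2} + e_3 ∧ e_{-3}) is not decomposable, i.e., ω_7 ∉ Ĝr(3,V). -/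
open ExteriorAlgebra

/-- The standard basis of `K^7`, in the ordering `e₀, e₁, e₂, e₃, e₋₁, e₋₂, e₋₃`. -/
noncomputable def e7 (K : Type) [RCLike K] (i : Fin 7) : Fin 7 → K := Pi.single i 1

/-- The 3-form `ω₇ = e₁∧e₂∧e₃ + e₋₁∧e₋₂∧e₋₃ + e₀∧(e₁∧e₋₁ + e₂∧e₋₂ + e₃∧e₋₃)`. -/
noncomputable def omega7 (K : Type) [RCLike K] : ExteriorAlgebra K (Fin 7 → K) :=
  ιMulti K 3 ![e7 K 1, e7 K 2, e7 K 3] + ιMulti K 3 ![e7 K 4, e7 K 5, e7 K 6] +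
    ιMulti K 3 ![e7 K 0, e7 K 1, e7 K 4] + ιMulti K 3 ![e7 K 0, e7 K 2, e7 K 5] +
    ιMulti K 3 ![e7 K 0, e7 K 3, e7 K 6]

noncomputable def cform (K : Type) [RCLike K] (n : ℕ) (σ : Fin n → Fin 7) :
    (Fin 7 → K) [⋀^Fin n]→ₗ[K] K :=
  (Matrix.detRowAlternating).compLinearMap (LinearMap.funLeft K K σ)

noncomputable def ell (K : Type) [RCLike K] (n : ℕ) (σ : Fin n → Fin 7) :
    ExteriorAlgebra K (Fin 7 → K) →ₗ[K] K :=
  liftAlternating (Pi.single n (cform K n σ))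

theorem ell_ιMulti (K : Type) [RCLike K] (n : ℕ) (σ : Fin n → Fin 7) (v : Fin n → Fin 7 → K) :
    ell K n σ (ιMulti K n v) = Matrix.det (Matrix.of fun i j => v i (σ j)) := by
  simp [ell, cform, Matrix.detRowAlternating]
  rfl

theorem wcons (K : Type) [RCLike K] (u : Fin 7 → K) (w : Fin 3 → Fin 7 → K) :
    ι K u * ιMulti K 3 w = ιMulti K 4 (Matrix.vecCons u w) := by
  rw [ιMulti_succ_apply (Matrix.vecCons u w)]
  simp

theorem omega7_ne_zero (K : Type) [RCLike K] : omega7 K ≠ 0 := by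
  intro h
  have := congrArg (ell K 3 ![1, 2, 3]) h
  simp only [omega7, map_add, map_zero, ell_ιMulti] at this
  simp [Matrix.det_succ_row_zero, Fin.sum_univ_succ, e7, Pi.single_apply] at this


set_option maxHeartbeats 1000000 in
/-- Over `K = ℝ` or `ℂ`, the 3-vector `ω₇` is not decomposable. -/
theorem omega7_not_decomposable (K : Type) [RCLike K] :
    ¬ ∃ v : Fin 3 → (Fin 7 → K), omega7 K = ιMulti K 3 v := by
  rintro ⟨v, h⟩
  set u := v 0 with hu
  have hz : ι K u * omega7 K = 0 := by
    rw [h, ιMulti_succ_apply v, ← mul_assoc, ι_sq_zero, zero_mul]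
  rw [omega7, mul_add, mul_add, mul_add, mul_add, wcons, wcons, wcons, wcons, wcons] at hz
  have key : ∀ σ : Fin 4 → Fin 7,
      Matrix.det (Matrix.of fun i j => (Matrix.vecCons u ![e7 K 1, e7 K 2, e7 K 3]) i (σ j))
      + Matrix.det (Matrix.of fun i j => (Matrix.vecCons u ![e7 K 4, e7 K 5, e7 K 6]) i (σ j))
      + Matrix.det (Matrix.of fun i j => (Matrix.vecCons u ![e7 K 0, e7 K 1, e7 K 4]) i (σ j))
      + Matrix.det (Matrix.of fun i j => (Matrix.vecCons u ![e7 K 0, e7 K 2, e7 K 5]) i (σ j))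
      + Matrix.det (Matrix.of fun i j => (Matrix.vecCons u ![e7 K 0, e7 K 3, e7 K 6]) i (σ j))
      = 0 := by
    intro σ
    have := congrArg (ell K 4 σ) hz
    simpa only [map_add, map_zero, ell_ιMulti] using this
  have h0 := key ![0, 1, 2, 3]
  have h1 := key ![1, 4, 5, 6]
  have h2 := key ![2, 4, 5, 6]
  have h3 := key ![3, 4, 5, 6]
  have h4 := key ![4, 1, 2, 3]
  have h5 := key ![5, 1, 2, 3]
  have h6 := key ![6, 1, 2, 3]
  simp [Matrix.det_succ_row_zero, Fin.sum_univ_succ, e7, Pi.single_apply, Fin.succAbove] at h0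
  simp [Matrix.det_succ_row_zero, Fin.sum_univ_succ, e7, Pi.single_apply, Fin.succAbove] at h1
  simp [Matrix.det_succ_row_zero, Fin.sum_univ_succ, e7, Pi.single_apply, Fin.succAbove] at h2
  simp [Matrix.det_succ_row_zero, Fin.sum_univ_succ, e7, Pi.single_apply, Fin.succAbove] at h3
  simp [Matrix.det_succ_row_zero, Fin.sum_univ_succ, e7, Pi.single_apply, Fin.succAbove] at h4
  simp [Matrix.det_succ_row_zero, Fin.sum_univ_succ, e7, Pi.single_apply, Fin.succAbove] at h5
  simp [Matrix.det_succ_row_zero, Fin.sum_univ_succ, e7, Pi.single_apply, Fin.succAbove] at h6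
  have huz : u = 0 := by
    funext i
    fin_cases i <;> simp_all
  have : omega7 K = 0 := by
    rw [h, ιMulti_succ_apply v, ← hu, huz, map_zero, zero_mul]
  exact omega7_ne_zero K this
end

section
/- Let V = K^8 with hyperbolic basis e_1,…,e_4,e_{-1},…,e_{-4} (⟨e_i,e_{-i}⟩ = 1, all other pairings zero). Then the 4-vector ω_8 = 2 e_1∧e_2∧e_3∧e_4 + 2 e_{-1}∧e_{-2}∧e_{-3}∧e_{-4} + Σ_{1≤i<j≤4} e_i∧e_j∧e_{-i}∧e_{-j} is not decomposable, i.e., ω_8 ∉ Ĝr(4,V). -/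
open ExteriorAlgebra

/-- The standard basis of `K^8`, in the ordering `e₁, e₂, e₃, e₄, e₋₁, e₋₂, e₋₃, e₋₄`. -/
noncomputable def e8 (K : Type) [RCLike K] (i : Fin 8) : Fin 8 → K := Pi.single i 1

/-- The 4-form
`ω₈ = 2e₁∧e₂∧e₃∧e₄ + 2e₋₁∧e₋₂∧e₋₃∧e₋₄ + Σ_{1≤i<j≤4} eᵢ∧e_j∧e₋ᵢ∧e₋ⱼ`. -/
noncomputable def omega8 (K : Type) [RCLike K] : ExteriorAlgebra K (Fin 8 → K) :=
  (2 : K) • ιMulti K 4 ![e8 K 0, e8 K 1, e8 K 2, e8 K 3] +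
    (2 : K) • ιMulti K 4 ![e8 K 4, e8 K 5, e8 K 6, e8 K 7] +
    ιMulti K 4 ![e8 K 0, e8 K 1, e8 K 4, e8 K 5] +
    ιMulti K 4 ![e8 K 0, e8 K 2, e8 K 4, e8 K 6] +
    ιMulti K 4 ![e8 K 0, e8 K 3, e8 K 4, e8 K 7] +
    ιMulti K 4 ![e8 K 1, e8 K 2, e8 K 5, e8 K 6] +
    ιMulti K 4 ![e8 K 1, e8 K 3, e8 K 5, e8 K 7] +
    ιMulti K 4 ![e8 K 2, e8 K 3, e8 K 6, e8 K 7]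

namespace Omega8Aux

variable {K : Type} [RCLike K]

/-- The image of the `i`-th basis vector in the exterior algebra. -/
noncomputable def g (K : Type) [RCLike K] (i : Fin 8) : ExteriorAlgebra K (Fin 8 → K) :=
  ι K (e8 K i)

lemma ei_swap (x y : Fin 8 → K) (z : ExteriorAlgebra K (Fin 8 → K)) :
    ι K x * (ι K y * z) = -(ι K y * (ι K x * z)) := by
  rw [← mul_assoc, ← mul_assoc, ← neg_mul,
    eq_neg_of_add_eq_zero_left (ι_add_mul_swap x y)]

lemma ei_sq (x : Fin 8 → K) (z : ExteriorAlgebra K (Fin 8 → K)) :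
    ι K x * (ι K x * z) = 0 := by
  rw [← mul_assoc, ι_sq_zero, zero_mul]

lemma g_swap2 (i j : Fin 8) (_ : j < i) :
    g K i * g K j = -(g K j * g K i) :=
  eq_neg_of_add_eq_zero_left (ι_add_mul_swap _ _)

lemma g_sq2 (i : Fin 8) : g K i * g K i = 0 := ι_sq_zero _

lemma g_swap (i j : Fin 8) (h : j < i) (z : ExteriorAlgebra K (Fin 8 → K)) :
    g K i * (g K j * z) = -(g K j * (g K i * z)) := by
  rw [← mul_assoc, ← mul_assoc, g_swap2 i j h, neg_mul]

lemma g_sq (i : Fin 8) (z : ExteriorAlgebra K (Fin 8 → K)) :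
    g K i * (g K i * z) = 0 := by
  rw [← mul_assoc, g_sq2, zero_mul]

lemma iMulti4_eq (v : Fin 4 → (Fin 8 → K)) :
    ιMulti K 4 v = ι K (v 0) * (ι K (v 1) * (ι K (v 2) * ι K (v 3))) := by
  rw [ιMulti_apply]
  norm_num [List.ofFn_succ, mul_assoc]
  rfl

lemma iMulti4_g (a b c d : Fin 8) :
    ιMulti K 4 ![e8 K a, e8 K b, e8 K c, e8 K d]
      = g K a * (g K b * (g K c * g K d)) := by
  rw [iMulti4_eq]; rfl

lemma iMulti8_eq :
    ιMulti K 8 (e8 K) =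
      g K 0 * (g K 1 * (g K 2 * (g K 3 * (g K 4 * (g K 5 * (g K 6 * g K 7)))))) := by
  rw [ιMulti_apply]
  norm_num [List.ofFn_succ, mul_assoc]
  rfl

/-- The square of a decomposable 4-vector is zero. -/
lemma dec_sq_zero (v : Fin 4 → (Fin 8 → K)) :
    ιMulti K 4 v * ιMulti K 4 v = 0 := by
  rw [iMulti4_eq]
  simp only [mul_assoc]
  rw [show ι K (v 3) * (ι K (v 0) * (ι K (v 1) * (ι K (v 2) * ι K (v 3))))
      = -(ι K (v 0) * (ι K (v 3) * (ι K (v 1) * (ι K (v 2) * ι K (v 3)))))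
    from ei_swap _ _ _]
  simp only [mul_neg, neg_eq_zero]
  rw [ei_swap (v 2) (v 0)]
  simp only [mul_neg, neg_eq_zero, neg_neg]
  rw [ei_swap (v 1) (v 0)]
  simp only [mul_neg, neg_eq_zero, neg_neg]
  rw [ei_sq]

/-- `ω₈ ∧ ω₈ = 14 e₁∧e₂∧⋯∧e₋₄ ≠ 0`. -/
lemma omega8_sq :
    omega8 K * omega8 K =
      (14 : K) • (g K 0 * (g K 1 * (g K 2 * (g K 3 * (g K 4 * (g K 5 * (g K 6 * g K 7))))))) := by
  rw [omega8]
  simp only [iMulti4_g]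
  simp only [add_mul, mul_add, smul_mul_assoc, mul_smul_comm, smul_smul, mul_assoc]
  simp (config := { decide := true }) only [g_swap, g_swap2, g_sq, g_sq2, mul_neg, neg_neg,
    mul_zero, neg_mul, smul_neg, smul_zero, add_zero, zero_add, neg_zero]
  module

/-- A family of alternating forms which in degree 8 is the determinant. -/
noncomputable def fdet (K : Type) [RCLike K] (i : ℕ) :
    ((Fin 8 → K) [⋀^Fin i]→ₗ[K] K) :=
  if h : i = 8 then h ▸ (Pi.basisFun K (Fin 8)).det else 0

lemma fdet_8 : fdet K 8 = (Pi.basisFun K (Fin 8)).det := by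
  simp [fdet]

lemma det_e8 : fdet K 8 (e8 K) = 1 := by
  rw [fdet_8]
  have he : e8 K = ⇑(Pi.basisFun K (Fin 8)) := by
    funext i; simp [e8]
  rw [he, Module.Basis.det_self]

lemma top_ne_zero :
    (ιMulti K 8 (e8 K) : ExteriorAlgebra K (Fin 8 → K)) ≠ 0 := by
  intro h
  have h2 := congrArg (liftAlternating (fdet K)) h
  rw [liftAlternating_apply_ιMulti, map_zero] at h2
  exact one_ne_zero ((det_e8 (K := K)).symm.trans h2)

end Omega8Aux

/-- Over `K = ℝ` or `ℂ`, the 4-vector `ω₈` is not decomposable. -/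
theorem omega8_not_decomposable (K : Type) [RCLike K] :
    ¬ ∃ v : Fin 4 → (Fin 8 → K), omega8 K = ιMulti K 4 v := by
  rintro ⟨v, hv⟩
  have hsq : omega8 K * omega8 K = 0 := by
    rw [hv]; exact Omega8Aux.dec_sq_zero v
  rw [Omega8Aux.omega8_sq] at hsq
  rcases smul_eq_zero.mp hsq with h | h
  · exact (by norm_num : (14 : K) ≠ 0) h
  · exact Omega8Aux.top_ne_zero (Omega8Aux.iMulti8_eq.trans h)
end
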